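/- Let sigma and delta be two permutations such that both (Omega, w sigma) and (Omega, w delta) generate superevaluations for the same superpartition Omega and fixed w. Then sigma^{-1} delta lies in the Young subgroup S_m x S_{[m+1,N]}; equivalently, sigma and delta represent the same coset of S_N / (S_m x S_{[m+1,N]}). -/

import Mathlib

private lemma key_antitone_unique {N : ℕ} (f : Fin N → ℕ) (σ τ : Equiv.Perm (Fin N))
    (hσ : Antitone (fun i => f (σ i))) (hτ : Antitone (fun i => f (τ i))) :
    ∀ i, f (σ i) = f (τ i) := by
  let g : Fin N → ℕᵒᵈ := fun i => f i
  have hσ' : Monotone (g ∘ σ) := fun a b hab => hσ hab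
  have hτ' : Monotone (g ∘ τ) := fun a b hab => hτ hab
  have h1 : g ∘ σ = g ∘ Tuple.sort g := Tuple.comp_sort_eq_comp_iff_monotone.mpr hσ'
  have h2 : g ∘ τ = g ∘ Tuple.sort g := Tuple.comp_sort_eq_comp_iff_monotone.mpr hτ'
  intro i
  have := congrFun (h1.trans h2.symm) i
  exact this

theorem superevaluation_coset_unique (N m : ℕ) (hm : m ≤ N) (Ω : Fin N → ℕ)
    (hΩa : ∀ i j : Fin N, (i : ℕ) < m → (j : ℕ) < m → i < j → Ω j < Ω i)
    (hΩs : ∀ i j : Fin N, m ≤ (i : ℕ) → i ≤ j → Ω j ≤ Ω i)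
    (w σ δ : Equiv.Perm (Fin N))
    (hσ1 : Antitone (fun i => Ω ((w * σ)⁻¹ i)))
    (hσ2 : Antitone (fun i =>
      Ω ((w * σ)⁻¹ i) + (if (((w * σ)⁻¹ i : Fin N) : ℕ) < m then 1 else 0)))
    (hδ1 : Antitone (fun i => Ω ((w * δ)⁻¹ i)))
    (hδ2 : Antitone (fun i =>
      Ω ((w * δ)⁻¹ i) + (if (((w * δ)⁻¹ i : Fin N) : ℕ) < m then 1 else 0))) :
    ∀ i : Fin N, (i : ℕ) < m ↔ ((σ⁻¹ (δ i) : Fin N) : ℕ) < m := by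
  set f : Fin N → ℕ := fun j => Ω j + (if (j : ℕ) < m then 1 else 0) with hf
  have h1 := key_antitone_unique Ω (w * σ)⁻¹ (w * δ)⁻¹ hσ1 hδ1
  have h2 := key_antitone_unique f (w * σ)⁻¹ (w * δ)⁻¹ hσ2 hδ2
  intro i
  have e1 := h1 ((w * δ) i)
  have e2 := h2 ((w * δ) i)
  have hinv : ((w * δ)⁻¹ ((w * δ) i)) = i := Equiv.symm_apply_apply (w * δ) i
  have hcomp : ((w * σ)⁻¹ ((w * δ) i)) = σ⁻¹ (δ i) := by
    simp [Equiv.Perm.mul_apply, mul_inv_rev]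
  rw [hinv, hcomp] at e1 e2
  simp only [hf] at e2
  rw [e1] at e2
  have hχ : (if ((σ⁻¹ (δ i) : Fin N) : ℕ) < m then 1 else 0) =
      (if (i : ℕ) < m then (1:ℕ) else 0) := by omega
  by_cases h : (i : ℕ) < m <;> by_cases h' : ((σ⁻¹ (δ i) : Fin N) : ℕ) < m <;>
    simp [h, h'] at hχ ⊢ <;> exact hχ
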